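/- arXiv:0903.4499 — 4 statements merged into one kernel-verified Lean document; each statement's English description precedes it below -/
import Mathlib

section
/- Let μ be a complex measure on ℝ of finite total variation and let a > 0. If the Fourier transform x ↦ ∫ e^{ixt} dμ(t) vanishes for all x ∈ [-a, a], then for every x ∈ [-a, a], e^{xy} ∫ dμ(t)/(t - iy) → 0 as y → +∞ and as y → -∞. -/
open MeasureTheory Filter Complex


lemma aux_ne (y : ℝ) (hy : y ≠ 0) (t : ℝ) : ((t : ℂ) - Complex.I * y) ≠ 0 := by
  intro h
  apply hy
  have := congrArg Complex.im h
  simpa using this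

lemma aux_norm_ge (y t : ℝ) : |y| ≤ ‖(t : ℂ) - Complex.I * y‖ := by
  have := Complex.abs_im_le_norm ((t : ℂ) - Complex.I * y)
  simp only [Complex.sub_im, Complex.ofReal_im, Complex.mul_im, Complex.I_re, Complex.I_im,
    Complex.ofReal_re, Complex.ofReal_im] at this
  simpa [abs_neg] using this

lemma aux_norm_ge' (y t : ℝ) : |t| ≤ ‖(t : ℂ) - Complex.I * y‖ := by
  have := Complex.abs_re_le_norm ((t : ℂ) - Complex.I * y)
  simpa using this

lemma aux_exp_norm (x t : ℝ) : ‖Complex.exp (Complex.I * x * t)‖ = 1 := by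
  simp [Complex.norm_exp]

lemma aux_int (ν : Measure ℝ) (h : ℝ → ℂ) (hint : Integrable h ν)
    (y : ℝ) (hy : y ≠ 0) (x : ℝ) :
    Integrable (fun t : ℝ => Complex.exp (Complex.I * x * t) * (h t / ((t:ℂ) - Complex.I * y))) ν := by
  have heq : (fun t : ℝ => Complex.exp (Complex.I * x * t) * (h t / ((t:ℂ) - Complex.I * y)))
      = fun t : ℝ => (Complex.exp (Complex.I * x * t) / ((t:ℂ) - Complex.I * y)) * h t := by
    funext t; ring
  rw [heq]
  apply hint.bdd_mul (c := |y|⁻¹)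
  · apply Continuous.aestronglyMeasurable
    apply Continuous.div
    · continuity
    · continuity
    · exact fun t => aux_ne y hy t
  · refine ae_of_all _ (fun t => ?_)
    rw [norm_div, aux_exp_norm]
    rw [div_eq_mul_inv, one_mul]
    exact inv_anti₀ (abs_pos.mpr hy) (aux_norm_ge y t)

lemma aux_int2 (ν : Measure ℝ) (h : ℝ → ℂ) (hint : Integrable h ν) (x : ℝ) :
    Integrable (fun t : ℝ => Complex.exp (Complex.I * x * t) * h t) ν := by
  apply hint.bdd_mul
  · exact (Continuous.cexp (by continuity)).aestronglyMeasurable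
  · exact ae_of_all _ (fun t => le_of_eq (aux_exp_norm x t))

-- derivative of the modified Cauchy transform in x
lemma aux_deriv (ν : Measure ℝ) [IsFiniteMeasure ν] (h : ℝ → ℂ) (hint : Integrable h ν)
    (y : ℝ) (hy : y ≠ 0) (x : ℝ) :
    HasDerivAt (fun x : ℝ => ∫ t, Complex.exp (Complex.I * x * t) * (h t / ((t:ℂ) - Complex.I * y)) ∂ν)
      (Complex.I * (∫ t, Complex.exp (Complex.I * x * t) * h t ∂ν)
        - y * ∫ t, Complex.exp (Complex.I * x * t) * (h t / ((t:ℂ) - Complex.I * y)) ∂ν) x := by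
  set F : ℝ → ℝ → ℂ := fun x t => Complex.exp (Complex.I * x * t) * (h t / ((t:ℂ) - Complex.I * y)) with hF
  set F' : ℝ → ℝ → ℂ := fun x t =>
    (Complex.I * t * Complex.exp (Complex.I * x * t) / ((t:ℂ) - Complex.I * y)) * h t with hF'
  have key : Integrable (F' x) ν ∧
      HasDerivAt (fun n => ∫ t, F n t ∂ν) (∫ t, F' x t ∂ν) x := by
    apply hasDerivAt_integral_of_dominated_loc_of_deriv_le (bound := fun t => ‖h t‖)
      (s := Metric.ball x 1) (Metric.ball_mem_nhds x one_pos)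
    · filter_upwards with x' using (aux_int ν h hint y hy x').1
    · exact aux_int ν h hint y hy x
    · apply AEStronglyMeasurable.mul _ hint.1
      apply Continuous.aestronglyMeasurable
      apply Continuous.div
      · continuity
      · continuity
      · exact fun t => aux_ne y hy t
    · filter_upwards with t x' _
      rw [hF']
      simp only
      rw [norm_mul, norm_div, norm_mul, aux_exp_norm, mul_one]
      have hIt : ‖Complex.I * (t:ℂ)‖ = |t| := by
        simp [map_mul]
      rw [hIt]
      have h1 : |t| / ‖(t:ℂ) - Complex.I * y‖ ≤ 1 := by
        apply div_le_one_of_le₀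
        · exact aux_norm_ge' y t
        · exact norm_nonneg _
      calc |t| / ‖(t:ℂ) - Complex.I * y‖ * ‖h t‖ ≤ 1 * ‖h t‖ :=
            mul_le_mul_of_nonneg_right h1 (norm_nonneg _)
        _ = ‖h t‖ := one_mul _
    · exact hint.norm
    · filter_upwards with t x' _
      have h1 : HasDerivAt (fun x' : ℝ => ((x' : ℂ))) 1 x' := by
        simpa using HasDerivAt.ofReal_comp (hasDerivAt_id x')
      have h2 : HasDerivAt (fun x' : ℝ => Complex.I * x' * t) (Complex.I * t) x' := by
        have := (h1.const_mul Complex.I).mul_const (t : ℂ)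
        simpa [mul_comm, mul_assoc] using this
      have h3 := (h2.cexp).mul_const (h t / ((t:ℂ) - Complex.I * y))
      refine h3.congr_deriv ?_
      rw [hF']
      ring
  have heq : ∫ t, F' x t ∂ν = Complex.I * (∫ t, Complex.exp (Complex.I * x * t) * h t ∂ν)
      - y * ∫ t, F x t ∂ν := by
    have hpt : ∀ t : ℝ, F' x t =
        Complex.I * (Complex.exp (Complex.I * x * t) * h t) - y * F x t := by
      intro t
      rw [hF', hF]
      simp only
      field_simp [aux_ne y hy t]
      linear_combination (h t * (y:ℂ)) * Complex.I_sq
    rw [show (fun t => F' x t) = fun t : ℝ =>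
        Complex.I * (Complex.exp (Complex.I * x * t) * h t) - y * F x t from funext hpt]
    rw [integral_sub ((aux_int2 ν h hint x).const_mul _) ((aux_int ν h hint y hy x).const_mul _),
      MeasureTheory.integral_const_mul, MeasureTheory.integral_const_mul]
  rw [heq] at key
  exact key.2

lemma aux_bound (ν : Measure ℝ) [IsFiniteMeasure ν] (h : ℝ → ℂ) (hint : Integrable h ν)
    (y : ℝ) (hy : y ≠ 0) (x : ℝ) :
    ‖∫ t, Complex.exp (Complex.I * x * t) * (h t / ((t:ℂ) - Complex.I * y)) ∂ν‖
      ≤ (∫ t, ‖h t‖ ∂ν) * |y|⁻¹ := by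
  calc ‖∫ t, Complex.exp (Complex.I * x * t) * (h t / ((t:ℂ) - Complex.I * y)) ∂ν‖
      ≤ ∫ t, ‖Complex.exp (Complex.I * x * t) * (h t / ((t:ℂ) - Complex.I * y))‖ ∂ν :=
        norm_integral_le_integral_norm _
    _ ≤ ∫ t, ‖h t‖ * |y|⁻¹ ∂ν := by
        apply integral_mono (aux_int ν h hint y hy x).norm (hint.norm.mul_const _)
        intro t
        simp only
        rw [norm_mul, aux_exp_norm, one_mul, norm_div, div_eq_mul_inv]
        exact mul_le_mul_of_nonneg_left (inv_anti₀ (abs_pos.mpr hy) (aux_norm_ge y t))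
          (norm_nonneg _)
    _ = (∫ t, ‖h t‖ ∂ν) * |y|⁻¹ := integral_mul_const _ _

lemma aux_const2 (ν : Measure ℝ) [IsFiniteMeasure ν] (h : ℝ → ℂ) (hint : Integrable h ν)
    (a : ℝ) (ha : 0 < a)
    (hvanish : ∀ x ∈ Set.Icc (-a) a, ∫ t, Complex.exp (Complex.I * x * t) * h t ∂ν = 0)
    (y : ℝ) (hy : y ≠ 0) :
    (∫ t, h t / ((t:ℂ) - Complex.I * y) ∂ν)
      = (∫ t, Complex.exp (Complex.I * ((-a : ℝ):ℂ) * t) * (h t / ((t:ℂ) - Complex.I * y)) ∂ν)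
          * Complex.exp (((-a : ℝ):ℂ) * (y:ℂ))
    ∧ (∫ t, h t / ((t:ℂ) - Complex.I * y) ∂ν)
      = (∫ t, Complex.exp (Complex.I * ((a : ℝ):ℂ) * t) * (h t / ((t:ℂ) - Complex.I * y)) ∂ν)
          * Complex.exp (((a : ℝ):ℂ) * (y:ℂ)) := by
  set g : ℝ → ℂ := fun x =>
    (∫ t, Complex.exp (Complex.I * x * t) * (h t / ((t:ℂ) - Complex.I * y)) ∂ν)
      * Complex.exp ((x:ℂ) * (y:ℂ)) with hgdef
  have hg : ∀ x : ℝ, HasDerivAt g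
      ((Complex.I * ∫ t, Complex.exp (Complex.I * x * t) * h t ∂ν)
        * Complex.exp ((x:ℂ) * (y:ℂ))) x := by
    intro x
    have hΦ := aux_deriv ν h hint y hy x
    have h1 : HasDerivAt (fun x : ℝ => ((x : ℂ))) 1 x := by
      simpa using HasDerivAt.ofReal_comp (hasDerivAt_id x)
    have he : HasDerivAt (fun x : ℝ => Complex.exp ((x:ℂ) * (y:ℂ)))
        ((y:ℂ) * Complex.exp ((x:ℂ) * (y:ℂ))) x := by
      have h2 := (h1.mul_const (y:ℂ)).cexp
      simpa [mul_comm] using h2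
    have h3 := hΦ.mul he
    refine h3.congr_deriv ?_
    ring
  have hconst : ∀ x ∈ Set.Icc (-a) a, g x = g (-a) := by
    apply constant_of_has_deriv_right_zero
    · exact fun x _ => (hg x).continuousAt.continuousWithinAt
    · intro x hx
      have h4 := ((hg x).hasDerivWithinAt (s := Set.Ici x))
      rw [hvanish x ⟨hx.1, hx.2.le⟩] at h4
      simpa using h4
  have h0 : g 0 = ∫ t, h t / ((t:ℂ) - Complex.I * y) ∂ν := by
    simp [hgdef]
  have hA := hconst 0 ⟨by linarith, ha.le⟩
  have hB := hconst a ⟨by linarith, le_refl a⟩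
  constructor
  · rw [← h0, hA]
  · rw [← h0, hA, ← hB]

/-- If the Fourier transform of a complex measure `h dν` (with `ν` a finite
positive measure and `h` integrable, representing a complex measure of finite total
variation) vanishes on `[-a, a]`, then for every `x ∈ [-a, a]` the Cauchy transform
satisfies `e^{xy} ∫ dμ(t)/(t - iy) → 0` as `y → ±∞`. -/
theorem stmt_0 (ν : Measure ℝ) [IsFiniteMeasure ν] (h : ℝ → ℂ)
    (hint : Integrable h ν) (a : ℝ) (ha : 0 < a)
    (hvanish : ∀ x ∈ Set.Icc (-a) a, ∫ t, Complex.exp (Complex.I * x * t) * h t ∂ν = 0) :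
    ∀ x ∈ Set.Icc (-a) a,
      Tendsto (fun y : ℝ => (Real.exp (x * y) : ℂ) * ∫ t, h t / ((t : ℂ) - Complex.I * y) ∂ν)
        atTop (nhds 0) ∧
      Tendsto (fun y : ℝ => (Real.exp (x * y) : ℂ) * ∫ t, h t / ((t : ℂ) - Complex.I * y) ∂ν)
        atBot (nhds 0) := by
  intro x hx
  set M : ℝ := ∫ t, ‖h t‖ ∂ν with hM
  constructor
  · apply squeeze_zero_norm' (a := fun y : ℝ => M / y)
    · filter_upwards [eventually_gt_atTop (0:ℝ)] with y hy0
      have hy : y ≠ 0 := ne_of_gt hy0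
      have hC := (aux_const2 ν h hint a ha hvanish y hy).1
      rw [norm_mul, hC, norm_mul]
      have he1 : ‖((Real.exp (x * y) : ℝ) : ℂ)‖ = Real.exp (x * y) := by
        rw [Complex.norm_real, Real.norm_eq_abs, Real.abs_exp]
      have he2 : ‖Complex.exp (((-a : ℝ):ℂ) * (y:ℂ))‖ = Real.exp (-a * y) := by
        simp [Complex.norm_exp]
      rw [he1, he2]
      have hb := aux_bound ν h hint y hy (-a)
      calc Real.exp (x * y) * (‖∫ t, Complex.exp (Complex.I * ((-a : ℝ):ℂ) * t)
              * (h t / ((t:ℂ) - Complex.I * y)) ∂ν‖ * Real.exp (-a * y))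
          = (Real.exp (x * y) * Real.exp (-a * y))
              * ‖∫ t, Complex.exp (Complex.I * ((-a : ℝ):ℂ) * t)
              * (h t / ((t:ℂ) - Complex.I * y)) ∂ν‖ := by ring
        _ ≤ 1 * (M * |y|⁻¹) := by
            apply mul_le_mul _ hb (norm_nonneg _) zero_le_one
            rw [← Real.exp_add, ← Real.exp_zero]
            apply Real.exp_le_exp.mpr
            nlinarith [hx.2]
        _ = M / y := by
            rw [one_mul, abs_of_pos hy0, div_eq_mul_inv]
    · exact Tendsto.div_atTop tendsto_const_nhds tendsto_id
  · apply squeeze_zero_norm' (a := fun y : ℝ => M / (-y))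
    · filter_upwards [eventually_lt_atBot (0:ℝ)] with y hy0
      have hy : y ≠ 0 := ne_of_lt hy0
      have hC := (aux_const2 ν h hint a ha hvanish y hy).2
      rw [norm_mul, hC, norm_mul]
      have he1 : ‖((Real.exp (x * y) : ℝ) : ℂ)‖ = Real.exp (x * y) := by
        rw [Complex.norm_real, Real.norm_eq_abs, Real.abs_exp]
      have he2 : ‖Complex.exp (((a : ℝ):ℂ) * (y:ℂ))‖ = Real.exp (a * y) := by
        simp [Complex.norm_exp]
      rw [he1, he2]
      have hb := aux_bound ν h hint y hy a
      calc Real.exp (x * y) * (‖∫ t, Complex.exp (Complex.I * ((a : ℝ):ℂ) * t)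
              * (h t / ((t:ℂ) - Complex.I * y)) ∂ν‖ * Real.exp (a * y))
          = (Real.exp (x * y) * Real.exp (a * y))
              * ‖∫ t, Complex.exp (Complex.I * ((a : ℝ):ℂ) * t)
              * (h t / ((t:ℂ) - Complex.I * y)) ∂ν‖ := by ring
        _ ≤ 1 * (M * |y|⁻¹) := by
            apply mul_le_mul _ hb (norm_nonneg _) zero_le_one
            rw [← Real.exp_add, ← Real.exp_zero]
            apply Real.exp_le_exp.mpr
            nlinarith [hx.1]
        _ = M / (-y) := by
            rw [one_mul, abs_of_neg hy0, div_eq_mul_inv]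
    · exact Tendsto.div_atTop tendsto_const_nhds tendsto_neg_atBot_atTop
end

section
/- The sequence Λ = {n²}_{n∈ℕ} is not a Pólya sequence: there exists a non-constant entire function of exponential type zero that is bounded on {n² : n ∈ ℕ}. -/
open Filter Complex

/-- An entire function has exponential type zero if `limsup_{|z|→∞} log|F(z)|/|z| = 0`. -/
def ExpTypeZero (F : ℂ → ℂ) : Prop :=
  Filter.limsup (fun z : ℂ => Real.log ‖F z‖ / ‖z‖)
    (Filter.comap (fun z : ℂ => ‖z‖) Filter.atTop) = 0

section Aux
open FormalMultilinearSeries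

open scoped Nat Topology

noncomputable def myc : ℕ → ℂ := fun k => (-1)^k * (Real.pi : ℂ)^(2*k) / ((2*k)! : ℂ)

lemma myc_ne (k : ℕ) : myc k ≠ 0 := by
  simp only [myc, div_ne_zero_iff, mul_ne_zero_iff]
  refine ⟨⟨pow_ne_zero _ (by norm_num), pow_ne_zero _ (by exact_mod_cast Real.pi_ne_zero)⟩, ?_⟩
  exact_mod_cast (Nat.factorial_ne_zero _)

lemma myc_norm (k : ℕ) : ‖myc k‖ = Real.pi ^ (2*k) / ((2*k)! : ℝ) := by
  simp [myc, norm_div, norm_pow, _root_.abs_of_nonneg Real.pi_pos.le]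

lemma myc_radius : (ofScalars ℂ myc).radius = ⊤ := by
  apply ofScalars_radius_eq_top_of_tendsto ℂ myc (Eventually.of_forall myc_ne)
  have h : ∀ n : ℕ, ‖myc (n+1)‖ / ‖myc n‖ = Real.pi^2 / ((2*n+1) * (2*n+2)) := by
    intro n
    rw [myc_norm, myc_norm]
    have hf : ((2*(n+1))! : ℝ) = (2*n+2) * ((2*n+1) * ((2*n)! : ℝ)) := by
      have : 2*(n+1) = (2*n+1)+1 := by ring
      rw [this, Nat.factorial_succ, Nat.factorial_succ]
      push_cast; ring
    have hp : Real.pi ^ (2*(n+1)) = Real.pi^(2*n) * Real.pi^2 := by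
      rw [← pow_add]; ring_nf
    rw [hf, hp]
    have h1 : ((2*n)! : ℝ) ≠ 0 := by exact_mod_cast Nat.factorial_ne_zero _
    have h2 : Real.pi ^ (2*n) ≠ 0 := pow_ne_zero _ Real.pi_ne_zero
    field_simp
  simp only [Nat.succ_eq_add_one, h]
  have key : Tendsto (fun n : ℕ => Real.pi^2 / (n+1 : ℝ)) atTop (𝓝 0) :=
    tendsto_const_div_atTop_nhds_zero_nat (Real.pi^2) |>.comp (tendsto_add_atTop_nat 1) |>.congr
      (by intro n; simp)
  refine squeeze_zero (fun n => by positivity) (fun n => ?_) key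
  have hn : (n:ℝ)+1 ≤ (2*n+1) * (2*n+2) := by nlinarith [Nat.cast_nonneg (α := ℝ) n]
  gcongr

noncomputable def myF : ℂ → ℂ := (ofScalars ℂ myc).sum

lemma myF_hasSum (z : ℂ) : HasSum (fun k => myc k * z^k) (myF z) := by
  have h := (ofScalars ℂ myc).hasSum (x := z) (by rw [myc_radius]; exact edist_lt_top z 0)
  rw [show myF z = (ofScalars ℂ myc).sum z from rfl]
  refine h.congr_fun fun k => ?_
  rw [ofScalars_apply_eq, smul_eq_mul]

lemma myF_diff : Differentiable ℂ myF := by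
  have hpos : (0:ENNReal) < (ofScalars ℂ myc).radius := by rw [myc_radius]; simp
  have h := ((ofScalars ℂ myc).hasFPowerSeriesOnBall hpos).differentiableOn
  intro z
  refine (h z ?_).differentiableAt (EMetric.isOpen_ball.mem_nhds ?_) <;>
    simp [EMetric.mem_ball, myc_radius, edist_lt_top]

lemma myF_eq_cos (z w : ℂ) (hw : w^2 = (Real.pi:ℂ)^2 * z) : myF z = Complex.cos w := by
  refine HasSum.unique (myF_hasSum z) ?_
  have h := Complex.hasSum_cos w
  refine h.congr_fun fun k => ?_
  rw [pow_mul, hw, mul_pow, ← pow_mul, myc]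
  ring

lemma myF_norm_le (z : ℂ) : ‖myF z‖ ≤ Real.exp (Real.pi * Real.sqrt ‖z‖) := by
  have hs : HasSum (fun k => ‖myc k * z^k‖) (Real.cosh (Real.pi * Real.sqrt ‖z‖)) := by
    refine (Real.hasSum_cosh (Real.pi * Real.sqrt ‖z‖)).congr_fun fun k => ?_
    rw [norm_mul, myc_norm, norm_pow, mul_pow, pow_mul, pow_mul, Real.sq_sqrt (norm_nonneg z)]
    ring
  have h1 : ‖myF z‖ ≤ Real.cosh (Real.pi * Real.sqrt ‖z‖) := by
    rw [← hs.tsum_eq]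
    exact (myF_hasSum z).tsum_eq ▸ norm_tsum_le_tsum_norm hs.summable
  refine h1.trans ?_
  have ht : 0 ≤ Real.pi * Real.sqrt ‖z‖ := by positivity
  rw [Real.cosh_eq]
  have := Real.exp_le_exp.2 (neg_le_self ht)
  linarith

lemma myF_zero : myF 0 = 1 := by rw [myF_eq_cos 0 0 (by ring)]; simp

lemma myF_one : myF 1 = -1 := by
  rw [myF_eq_cos 1 (Real.pi:ℂ) (by ring), ← Complex.ofReal_cos, Real.cos_pi]
  norm_num

lemma myF_sq (n : ℕ) : ‖myF ((n:ℂ)^2)‖ ≤ 1 := by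
  rw [myF_eq_cos _ ((Real.pi:ℂ)*n) (by ring),
    show (Real.pi:ℂ)*n = ((Real.pi*n : ℝ):ℂ) by push_cast; ring, ← Complex.ofReal_cos,
    Complex.norm_real, Real.norm_eq_abs]
  exact Real.abs_cos_le_one _

lemma myF_neg (x : ℝ) (hx : 0 ≤ x) :
    ‖myF (-(x:ℂ))‖ = Real.cosh (Real.pi * Real.sqrt x) := by
  have hw : (((Real.pi * Real.sqrt x : ℝ) : ℂ) * Complex.I)^2 = (Real.pi:ℂ)^2 * (-(x:ℂ)) := by
    rw [mul_pow, Complex.I_sq,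
      show ((Real.pi*Real.sqrt x:ℝ):ℂ)^2 = ((Real.pi^2 * x :ℝ):ℂ) by
        norm_cast; rw [mul_pow, Real.sq_sqrt hx]]
    push_cast
    ring
  rw [myF_eq_cos _ _ hw, Complex.cos_mul_I, ← Complex.ofReal_cosh, Complex.norm_real,
    Real.norm_eq_abs, abs_of_pos (Real.cosh_pos _)]

lemma myF_set_eq :
    {a : ℝ | ∀ᶠ z in (Filter.comap (fun z : ℂ => ‖z‖) Filter.atTop),
      Real.log ‖myF z‖ / ‖z‖ ≤ a} = Set.Ioi 0 := by
  ext a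
  simp only [Set.mem_setOf_eq, Set.mem_Ioi, Filter.eventually_comap, Filter.eventually_atTop]
  constructor
  · rintro ⟨R, hR⟩
    set x : ℝ := max R 1 with hx
    have hx1 : (1:ℝ) ≤ x := le_max_right _ _
    have hx0 : (0:ℝ) < x := lt_of_lt_of_le one_pos hx1
    have hz : ‖(-(x:ℂ))‖ = x := by simp [abs_of_pos hx0]
    have := hR x (le_max_left _ _) (-(x:ℂ)) hz
    rw [hz, myF_neg x hx0.le] at this
    have hlog : 0 < Real.log (Real.cosh (Real.pi * Real.sqrt x)) := by
      apply Real.log_pos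
      rw [Real.one_lt_cosh]
      have : 0 < Real.sqrt x := Real.sqrt_pos.2 hx0
      positivity
    exact lt_of_lt_of_le (div_pos hlog hx0) this
  · intro ha
    refine ⟨max 1 ((Real.pi/a)^2), fun r hr z hz => ?_⟩
    have hr1 : (1:ℝ) ≤ r := le_trans (le_max_left _ _) hr
    have hr0 : (0:ℝ) < r := lt_of_lt_of_le one_pos hr1
    have hrpa : (Real.pi/a)^2 ≤ r := le_trans (le_max_right _ _) hr
    have hsq : Real.pi / a ≤ Real.sqrt r := by
      rw [show Real.pi / a = Real.sqrt ((Real.pi/a)^2) from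
        (Real.sqrt_sq (by positivity)).symm]
      exact Real.sqrt_le_sqrt hrpa
    have hlog : Real.log ‖myF z‖ ≤ Real.pi * Real.sqrt r := by
      rcases eq_or_lt_of_le (norm_nonneg (myF z)) with h0 | h0
      · rw [← h0, Real.log_zero]; positivity
      · rw [Real.log_le_iff_le_exp h0]
        have := myF_norm_le z
        rwa [hz] at this
    rw [hz]
    rw [div_le_iff₀ hr0]
    refine hlog.trans ?_
    have h1 : Real.pi * Real.sqrt r ≤ (a * Real.sqrt r) * Real.sqrt r := by
      have hs1 : (1:ℝ) ≤ Real.sqrt r := by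
        rw [show (1:ℝ) = Real.sqrt 1 from Real.sqrt_one.symm]
        exact Real.sqrt_le_sqrt hr1
      have : Real.pi ≤ a * Real.sqrt r := by
        calc Real.pi = a * (Real.pi / a) := by field_simp
        _ ≤ a * Real.sqrt r := by
            exact mul_le_mul_of_nonneg_left hsq ha.le
      nlinarith
    refine h1.trans ?_
    rw [mul_assoc, Real.mul_self_sqrt hr0.le]

lemma myF_type_zero : Filter.limsup (fun z : ℂ => Real.log ‖myF z‖ / ‖z‖)
    (Filter.comap (fun z : ℂ => ‖z‖) Filter.atTop) = 0 := by
  rw [Filter.limsup_eq, myF_set_eq, csInf_Ioi]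


end Aux

/-- The sequence `{n²}` is not a Pólya sequence: there is a non-constant
entire function of exponential type zero bounded on `{n² : n ∈ ℕ}`. -/
theorem stmt_4 :
    ∃ F : ℂ → ℂ, Differentiable ℂ F ∧ ExpTypeZero F ∧
      ¬(∃ c : ℂ, ∀ z : ℂ, F z = c) ∧
      ∃ M : ℝ, ∀ n : ℕ, ‖F ((n : ℂ) ^ 2)‖ ≤ M := by
  refine ⟨myF, myF_diff, myF_type_zero, ?_, 1, myF_sq⟩
  rintro ⟨c, hc⟩
  have h0 := hc 0
  have h1 := hc 1
  rw [myF_zero] at h0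
  rw [myF_one] at h1
  rw [← h0] at h1
  norm_num at h1
end

section
/- Let μ be a nonzero complex measure on ℝ of finite total variation. If F is an entire function of exponential type zero satisfying ∫ (Fⁿ(t) - Fⁿ(z))/(t-z) dμ(t) = 0 for all z ∈ ℂ and all n ∈ ℕ, and |F| ≤ M on the support of μ, then |F(z)| ≤ M for every z with Im z ≠ 0 such that ∫ dμ(t)/(t-z) ≠ 0. -/
open MeasureTheory Filter Complex

/-- If `μ = h dν` is a nonzero complex measure of finite total variation,
`F` is entire of exponential type zero with `∫ (Fⁿ(t) - Fⁿ(z))/(t-z) dμ(t) = 0` for all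
`z ∈ ℂ` and all `n`, and `|F| ≤ M` on the support of `μ`, then `|F(z)| ≤ M` for every `z`
with `Im z ≠ 0` at which `∫ dμ(t)/(t-z) ≠ 0`. -/
theorem stmt_15 (ν : Measure ℝ) [IsFiniteMeasure ν] (h : ℝ → ℂ)
    (hint : Integrable h ν) (hne : ¬ (∀ᵐ t ∂ν, h t = 0))
    (F : ℂ → ℂ) (hF : Differentiable ℂ F) (htype : ExpTypeZero F)
    (hker : ∀ n : ℕ, ∀ z : ℂ,
      ∫ t, ((F t) ^ n - (F z) ^ n) / ((t : ℂ) - z) * h t ∂ν = 0)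
    (M : ℝ) (hM : ∀ᵐ t ∂ν, h t ≠ 0 → ‖F (t : ℂ)‖ ≤ M) :
    ∀ z : ℂ, z.im ≠ 0 → (∫ t, h t / ((t : ℂ) - z) ∂ν) ≠ 0 → ‖F z‖ ≤ M := by
  intro z hz hc
  set c : ℂ := ∫ t, h t / ((t : ℂ) - z) ∂ν with hc_def
  have hsub : ∀ t : ℝ, ((t : ℂ) - z) ≠ 0 := by
    intro t ht
    apply hz
    have := congrArg Complex.im ht
    simpa using this.symm
  have him : (0 : ℝ) < |z.im| := abs_pos.mpr hz
  have hlb : ∀ t : ℝ, |z.im| ≤ ‖(t : ℂ) - z‖ := by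
    intro t
    have h1 := Complex.abs_im_le_norm ((t : ℂ) - z)
    simpa using h1
  -- M ≥ 0
  have hfreq : ∃ᵐ t ∂ν, ¬ h t = 0 := Filter.not_eventually.mp hne
  have hM0 : 0 ≤ M := by
    obtain ⟨t, ht, hMt⟩ := (hfreq.and_eventually hM).exists
    exact le_trans (norm_nonneg _) (hMt ht)
  -- measurability
  have hcont : ∀ n : ℕ, Continuous (fun t : ℝ => F (t : ℂ) ^ n / ((t : ℂ) - z)) := by
    intro n
    exact ((hF.continuous.comp Complex.continuous_ofReal).pow n).div
      (by continuity) hsub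
  have hφmeas : ∀ n : ℕ,
      AEStronglyMeasurable (fun t : ℝ => F (t : ℂ) ^ n / ((t : ℂ) - z) * h t) ν :=
    fun n => ((hcont n).aestronglyMeasurable).mul hint.1
  -- pointwise bound
  have hbound : ∀ n : ℕ, ∀ᵐ (t : ℝ) ∂ν,
      ‖F (t : ℂ) ^ n / ((t : ℂ) - z) * h t‖ ≤ (M ^ n / |z.im|) * ‖h t‖ := by
    intro n
    filter_upwards [hM] with t hMt
    by_cases h0 : h t = 0
    · simp [h0, div_nonneg (pow_nonneg hM0 n) him.le]
    · have hFt : ‖F (t : ℂ)‖ ≤ M := hMt h0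
      have h1 : ‖F (t : ℂ) ^ n / ((t : ℂ) - z) * h t‖
          = ‖F (t : ℂ)‖ ^ n / ‖(t : ℂ) - z‖ * ‖h t‖ := by
        simp [norm_div, norm_pow]
      rw [h1]
      have h2 : ‖F (t : ℂ)‖ ^ n / ‖(t : ℂ) - z‖ ≤ M ^ n / |z.im| :=
        div_le_div₀ (pow_nonneg hM0 n) (pow_le_pow_left₀ (norm_nonneg _) hFt n) him (hlb t)
      exact mul_le_mul_of_nonneg_right h2 (norm_nonneg _)
  have hInt1 : ∀ n : ℕ,
      Integrable (fun t : ℝ => F (t : ℂ) ^ n / ((t : ℂ) - z) * h t) ν :=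
    fun n => Integrable.mono' (hint.norm.const_mul _) (hφmeas n) (hbound n)
  have hInt2 : Integrable (fun t : ℝ => h t / ((t : ℂ) - z)) ν := by
    have hmeas : AEStronglyMeasurable (fun t : ℝ => h t / ((t : ℂ) - z)) ν := by
      simp_rw [div_eq_mul_inv]
      exact hint.1.mul (Continuous.aestronglyMeasurable
        ((by continuity : Continuous fun t : ℝ => (t : ℂ) - z).inv₀ hsub))
    apply Integrable.mono' (hint.norm.const_mul (1 / |z.im|)) hmeas
    filter_upwards with t
    calc ‖h t / ((t : ℂ) - z)‖ = ‖h t‖ / ‖(t : ℂ) - z‖ := norm_div _ _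
      _ ≤ ‖h t‖ / |z.im| := div_le_div₀ (norm_nonneg _) le_rfl him (hlb t)
      _ = 1 / |z.im| * ‖h t‖ := by ring
  -- key identity
  have hkey : ∀ n : ℕ, F z ^ n * c = ∫ t, F (t : ℂ) ^ n / ((t : ℂ) - z) * h t ∂ν := by
    intro n
    have h0 := hker n z
    have heq : (fun t : ℝ => (F (t : ℂ) ^ n - F z ^ n) / ((t : ℂ) - z) * h t)
        = fun t : ℝ => F (t : ℂ) ^ n / ((t : ℂ) - z) * h t
          - F z ^ n * (h t / ((t : ℂ) - z)) := by
      funext t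
      field_simp
    rw [heq, integral_sub (hInt1 n) (hInt2.const_mul _), integral_const_mul] at h0
    rw [sub_eq_zero] at h0
    exact h0.symm
  -- positivity of ∫‖h‖
  have hI : 0 < ∫ t, ‖h t‖ ∂ν := by
    rcases lt_or_eq_of_le (integral_nonneg (f := fun t => ‖h t‖) (fun t => norm_nonneg (h t))) with hlt | heq
    · exact hlt
    · exfalso
      apply hne
      have := (integral_eq_zero_iff_of_nonneg (fun t => norm_nonneg (h t)) hint.norm).mp heq.symm
      filter_upwards [this] with t ht
      simpa using ht
  have hcpos : (0 : ℝ) < ‖c‖ := norm_pos_iff.mpr hc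
  set K : ℝ := (∫ t, ‖h t‖ ∂ν) / (|z.im| * ‖c‖) with hK_def
  have hKpos : 0 < K := div_pos hI (mul_pos him hcpos)
  -- power bound
  have hpow : ∀ n : ℕ, ‖F z‖ ^ n ≤ M ^ n * K := by
    intro n
    have h1 : ‖F z ^ n * c‖ ≤ (M ^ n / |z.im|) * ∫ t, ‖h t‖ ∂ν := by
      rw [hkey n]
      calc ‖∫ t, F (t : ℂ) ^ n / ((t : ℂ) - z) * h t ∂ν‖
          ≤ ∫ t, (M ^ n / |z.im|) * ‖h t‖ ∂ν :=
            norm_integral_le_of_norm_le (hint.norm.const_mul _) (hbound n)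
        _ = (M ^ n / |z.im|) * ∫ t, ‖h t‖ ∂ν := integral_const_mul _ _
    have h2 : ‖F z‖ ^ n * ‖c‖ ≤ (M ^ n / |z.im|) * ∫ t, ‖h t‖ ∂ν := by
      rw [← norm_pow, ← norm_mul]
      exact h1
    have h3 : ‖F z‖ ^ n ≤ ((M ^ n / |z.im|) * ∫ t, ‖h t‖ ∂ν) / ‖c‖ :=
      (le_div_iff₀ hcpos).mpr h2
    calc ‖F z‖ ^ n ≤ ((M ^ n / |z.im|) * ∫ t, ‖h t‖ ∂ν) / ‖c‖ := h3
      _ = M ^ n * K := by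
          rw [hK_def]
          field_simp
  -- conclude
  rcases eq_or_lt_of_le hM0 with rfl | hMpos
  · have h1 := hpow 1
    simpa using h1
  · -- M > 0 : take nth roots
    have hstep : ∀ n : ℕ, 1 ≤ n → ‖F z‖ ≤ M * K ^ ((1 : ℝ) / n) := by
      intro n hn
      have hn' : (0 : ℝ) < n := by exact_mod_cast hn
      have h1 : (‖F z‖ ^ n) ^ ((1 : ℝ) / n) ≤ (M ^ n * K) ^ ((1 : ℝ) / n) :=
        Real.rpow_le_rpow (pow_nonneg (norm_nonneg _) n) (hpow n)
          (by positivity)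
      have h2 : (‖F z‖ ^ n) ^ ((1 : ℝ) / n) = ‖F z‖ := by
        rw [← Real.rpow_natCast ‖F z‖ n, ← Real.rpow_mul (norm_nonneg _)]
        rw [mul_one_div, div_self hn'.ne', Real.rpow_one]
      have h3 : (M ^ n * K) ^ ((1 : ℝ) / n) = M * K ^ ((1 : ℝ) / n) := by
        rw [Real.mul_rpow (pow_nonneg hM0 n) hKpos.le]
        congr 1
        rw [← Real.rpow_natCast M n, ← Real.rpow_mul hM0]
        rw [mul_one_div, div_self hn'.ne', Real.rpow_one]
      rw [h2, h3] at h1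
      exact h1
    have hlim : Tendsto (fun n : ℕ => M * K ^ ((1 : ℝ) / n)) atTop (nhds M) := by
      have h1 : Tendsto (fun n : ℕ => (1 : ℝ) / n) atTop (nhds 0) :=
        tendsto_one_div_atTop_nhds_zero_nat
      have h2 : Tendsto (fun n : ℕ => K ^ ((1 : ℝ) / n)) atTop (nhds 1) := by
        have h3 : ∀ n : ℕ, K ^ ((1 : ℝ) / n) = Real.exp (Real.log K * (1 / n)) :=
          fun n => Real.rpow_def_of_pos hKpos _
        simp_rw [h3]
        have h4 : Tendsto (fun n : ℕ => Real.log K * (1 / n)) atTop (nhds 0) := by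
          simpa using h1.const_mul (Real.log K)
        simpa [Function.comp_def] using (Real.continuous_exp.tendsto 0).comp h4
      simpa using (tendsto_const_nhds.mul h2 :
        Tendsto (fun n : ℕ => M * K ^ ((1 : ℝ) / n)) atTop (nhds (M * 1)))
    refine ge_of_tendsto hlim ?_
    filter_upwards [eventually_ge_atTop 1] with n hn
    exact hstep n hn
end

section
/- Let Θ be an inner function on ℂ₊. Then 1 - Θ(iy) does not tend to 0 exponentially fast as y → +∞: for every c > 0, e^{cy}·|1 - Θ(iy)| → ∞ as y → +∞ (unless Θ ≡ 1). -/
open MeasureTheory Filter Complex Set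

/-- `Θ` is an inner function on the upper half-plane: analytic, bounded by `1`, with
vertical boundary values of modulus `1` a.e. on ℝ. -/
def IsInner (Θ : ℂ → ℂ) : Prop :=
  DifferentiableOn ℂ Θ {z : ℂ | 0 < z.im} ∧
  (∀ z : ℂ, 0 < z.im → ‖Θ z‖ ≤ 1) ∧
  (∀ᵐ x : ℝ, Tendsto (fun y : ℝ => ‖Θ (x + y * Complex.I)‖)
    (nhdsWithin 0 (Ioi 0)) (nhds 1))

private lemma normSq_mobius_identity (b v : ℂ) :
    Complex.normSq (1 - (starRingEnd ℂ) b * v) - Complex.normSq (v - b)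
      = (1 - Complex.normSq b) * (1 - Complex.normSq v) := by
  simp [Complex.normSq_apply, Complex.mul_re, Complex.mul_im, Complex.sub_re, Complex.sub_im,
    Complex.conj_re, Complex.conj_im]
  ring

private lemma cayley_im_pos {w : ℂ} (hw : w ∈ Metric.ball (0:ℂ) 1) :
    0 < (Complex.I * (1 + w) / (1 - w)).im := by
  rw [Metric.mem_ball, dist_zero_right] at hw
  have hw1 : Complex.normSq w < 1 := by
    rw [Complex.normSq_eq_norm_sq]
    nlinarith [norm_nonneg w, hw]
  have hne : (1 : ℂ) - w ≠ 0 := by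
    intro h
    have : w = 1 := by linear_combination -h
    simp [this] at hw
  have hns : 0 < Complex.normSq (1 - w) := Complex.normSq_pos.2 hne
  rw [Complex.div_im]
  have h1 : (Complex.I * (1 + w)).im * (1 - w).re / Complex.normSq (1 - w)
      - (Complex.I * (1 + w)).re * (1 - w).im / Complex.normSq (1 - w)
      = (1 - Complex.normSq w) / Complex.normSq (1 - w) := by
    rw [div_sub_div_same]
    congr 1
    simp [Complex.mul_im, Complex.mul_re, Complex.normSq_apply]
    ring
  rw [h1]
  exact div_pos (by linarith) hns

private lemma mobius_den_ne {b v : ℂ} (hb : ‖b‖ < 1) (hv : ‖v‖ < 1) :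
    (1 : ℂ) - (starRingEnd ℂ) b * v ≠ 0 := by
  intro h
  have h1 : (1 : ℂ) = (starRingEnd ℂ) b * v := by linear_combination h
  have : ‖(starRingEnd ℂ) b * v‖ < 1 := by
    rw [norm_mul, RCLike.norm_conj]
    nlinarith [norm_nonneg b, norm_nonneg v]
  rw [← h1] at this
  simp at this

private lemma mobius_norm_lt {b v : ℂ} (hb : ‖b‖ < 1) (hv : ‖v‖ < 1) :
    ‖(v - b) / (1 - (starRingEnd ℂ) b * v)‖ < 1 := by
  have hden := mobius_den_ne hb hv
  rw [norm_div, div_lt_one (norm_pos_iff.2 hden)]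
  have key := normSq_mobius_identity b v
  have h1 : Complex.normSq b < 1 := by
    rw [Complex.normSq_eq_norm_sq]; nlinarith [norm_nonneg b, hb]
  have h2 : Complex.normSq v < 1 := by
    rw [Complex.normSq_eq_norm_sq]; nlinarith [norm_nonneg v, hv]
  have h3 : Complex.normSq (v - b) < Complex.normSq (1 - (starRingEnd ℂ) b * v) := by nlinarith
  have e1 : ‖v - b‖ ^ 2 = Complex.normSq (v - b) := by
    rw [Complex.normSq_eq_norm_sq]
  have e2 : ‖1 - (starRingEnd ℂ) b * v‖ ^ 2 = Complex.normSq (1 - (starRingEnd ℂ) b * v) := by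
    rw [Complex.normSq_eq_norm_sq]
  nlinarith [norm_nonneg (v - b), norm_nonneg (1 - (starRingEnd ℂ) b * v)]

/-- Key Schwarz–Pick estimate: `‖1 - Θ(i)‖ ≤ y ‖1 - Θ(iy)‖` for `y ≥ 1`. -/
private lemma schwarz_bound (Θ : ℂ → ℂ)
    (hd : DifferentiableOn ℂ Θ {z : ℂ | 0 < z.im})
    (hstrict : ∀ z : ℂ, 0 < z.im → ‖Θ z‖ < 1) {y : ℝ} (hy : 1 ≤ y) :
    ‖1 - Θ Complex.I‖ ≤ y * ‖1 - Θ ((y : ℂ) * Complex.I)‖ := by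
  set b := Θ Complex.I with hbdef
  have hbn : ‖b‖ < 1 := hstrict Complex.I (by simp)
  set C : ℂ → ℂ := fun w => Complex.I * (1 + w) / (1 - w) with hCdef
  set h : ℂ → ℂ := fun w => (Θ (C w) - b) / (1 - (starRingEnd ℂ) b * Θ (C w)) with hhdef
  have hCmaps : ∀ w ∈ Metric.ball (0:ℂ) 1, 0 < (C w).im := fun w hw => cayley_im_pos hw
  have hball_ne : ∀ w ∈ Metric.ball (0:ℂ) 1, (1 : ℂ) - w ≠ 0 := by
    intro w hw hcon
    rw [Metric.mem_ball, dist_zero_right] at hw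
    have : w = 1 := by linear_combination -hcon
    simp [this] at hw
  have hCdiff : DifferentiableOn ℂ C (Metric.ball (0:ℂ) 1) := by
    apply DifferentiableOn.div
    · exact (Differentiable.differentiableOn (by fun_prop))
    · exact (Differentiable.differentiableOn (by fun_prop))
    · exact hball_ne
  have hΘC : DifferentiableOn ℂ (fun w => Θ (C w)) (Metric.ball (0:ℂ) 1) :=
    hd.comp hCdiff (fun w hw => hCmaps w hw)
  have hΘCn : ∀ w ∈ Metric.ball (0:ℂ) 1, ‖Θ (C w)‖ < 1 :=
    fun w hw => hstrict _ (hCmaps w hw)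
  have hhdiff : DifferentiableOn ℂ h (Metric.ball (0:ℂ) 1) := by
    apply DifferentiableOn.div
    · exact hΘC.sub_const b
    · exact (differentiableOn_const _).sub ((differentiableOn_const _).mul hΘC)
    · exact fun w hw => mobius_den_ne hbn (hΘCn w hw)
  have hhmaps : Set.MapsTo h (Metric.ball (0:ℂ) 1) (Metric.ball (0:ℂ) 1) := by
    intro w hw
    rw [Metric.mem_ball, dist_zero_right]
    exact mobius_norm_lt hbn (hΘCn w hw)
  have hC0 : C 0 = Complex.I := by simp [hCdef]
  have hh0 : h 0 = 0 := by simp [hhdef, hC0, ← hbdef]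
  -- evaluate at r = (y-1)/(y+1)
  set r : ℝ := (y - 1) / (y + 1) with hrdef
  have hyp : (0:ℝ) < y + 1 := by linarith
  have hr0 : 0 ≤ r := div_nonneg (by linarith) (by linarith)
  have hr1 : r < 1 := by rw [div_lt_one hyp]; linarith
  have hrabs : ‖((r : ℝ) : ℂ)‖ < 1 := by
    rwa [Complex.norm_real, Real.norm_of_nonneg hr0]
  have hsch := Complex.norm_le_norm_of_mapsTo_ball hhdiff (hhmaps.mono_right Metric.ball_subset_closedBall) hh0 hrabs
  have hCr : C ((r : ℝ) : ℂ) = (y : ℂ) * Complex.I := by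
    have hy1 : (y : ℂ) + 1 ≠ 0 := by
      intro hcon
      have := congrArg Complex.re hcon
      simp at this
      linarith
    rw [hCdef]
    simp only [hrdef]
    push_cast
    field_simp
    ring
  set v : ℂ := Θ ((y : ℂ) * Complex.I) with hvdef
  have hvn : ‖v‖ < 1 := by
    apply hstrict
    simp
    linarith
  have habs : ‖(v - b) / (1 - (starRingEnd ℂ) b * v)‖ ≤ r := by
    have h2 : ‖((Θ (C ((r:ℝ):ℂ)) - b)
        / (1 - (starRingEnd ℂ) b * Θ (C ((r:ℝ):ℂ))))‖ ≤ r := by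
      rwa [Complex.norm_real, Real.norm_of_nonneg hr0] at hsch
    rw [hCr] at h2
    exact h2
  have hden := mobius_den_ne hbn hvn
  have h1 : ‖v - b‖ ≤ r * ‖1 - (starRingEnd ℂ) b * v‖ := by
    rw [norm_div, div_le_iff₀ (norm_pos_iff.2 hden)] at habs
    linarith [habs]
  have h2 : ‖1 - (starRingEnd ℂ) b * v‖ ≤ ‖1 - v‖ + ‖1 - b‖ := by
    have e : 1 - (starRingEnd ℂ) b * v = (1 - v) + v * (1 - (starRingEnd ℂ) b) := by ring
    rw [e]
    refine (norm_add_le _ _).trans ?_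
    have : ‖v * (1 - (starRingEnd ℂ) b)‖ ≤ 1 * ‖1 - b‖ := by
      rw [norm_mul]
      have : (1 : ℂ) - (starRingEnd ℂ) b = (starRingEnd ℂ) (1 - b) := by
        simp [map_sub]
      rw [this, RCLike.norm_conj]
      exact mul_le_mul_of_nonneg_right hvn.le (norm_nonneg _)
    linarith
  have h3 : ‖1 - b‖ ≤ ‖1 - v‖ + ‖v - b‖ := by
    have e : (1 : ℂ) - b = (1 - v) + (v - b) := by ring
    rw [e]; exact norm_add_le _ _
  -- combine
  set A := ‖1 - v‖
  set B := ‖1 - b‖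
  have hAB : B ≤ A + r * (A + B) := by
    have := h1.trans (mul_le_mul_of_nonneg_left h2 hr0)
    linarith
  have hr : r * (y + 1) = y - 1 := by
    rw [hrdef]; field_simp
  have hmul := mul_le_mul_of_nonneg_right hAB hyp.le
  have hA0 : 0 ≤ A := norm_nonneg _
  have hB0 : 0 ≤ B := norm_nonneg _
  nlinarith [hmul, hr, hA0, hB0]

/-- For an inner function `Θ` on `ℂ₊` with `Θ ≢ 1`, the quantity `1 - Θ(iy)`
does not tend to `0` exponentially fast: for every `c > 0`,
`e^{cy}·|1 - Θ(iy)| → ∞` as `y → +∞`. -/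
theorem stmt_18 (Θ : ℂ → ℂ) (hΘ : IsInner Θ)
    (hne1 : ∃ z : ℂ, 0 < z.im ∧ Θ z ≠ 1) :
    ∀ c : ℝ, 0 < c →
      Tendsto (fun y : ℝ => Real.exp (c * y) * ‖1 - Θ (y * Complex.I)‖) atTop atTop := by
  obtain ⟨hd, hb, _⟩ := hΘ
  obtain ⟨z₀, hz₀, hz₀ne⟩ := hne1
  intro c hc
  have hopen : IsOpen {z : ℂ | 0 < z.im} := isOpen_lt continuous_const Complex.continuous_im
  have hconn : IsPreconnected {z : ℂ | 0 < z.im} :=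
    (convex_halfSpace_im_gt (0:ℝ)).isPreconnected
  have hIU : Complex.I ∈ {z : ℂ | 0 < z.im} := by simp
  by_cases hI : ‖Θ Complex.I‖ < 1
  · -- non-constant-like case: use the Schwarz bound
    have hstrict : ∀ z : ℂ, 0 < z.im → ‖Θ z‖ < 1 := by
      intro z hz
      rcases lt_or_eq_of_le (hb z hz) with h | h
      · exact h
      · exfalso
        have hmax : IsMaxOn (norm ∘ Θ) {w : ℂ | 0 < w.im} z := by
          intro x hx
          simpa [h] using hb x hx
        have heq := Complex.eqOn_of_isPreconnected_of_isMaxOn_norm hconn hopen hd hz hmax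
        have h1 : Θ Complex.I = Θ z := heq hIU
        exact (ne_of_lt hI) (by rw [h1]; exact h)
    have hbne : Θ Complex.I ≠ 1 := by
      intro hcon
      rw [hcon] at hI
      simp at hI
    have hK : 0 < ‖1 - Θ Complex.I‖ := by
      rw [norm_pos_iff, sub_ne_zero]
      exact fun hcon => hbne hcon.symm
    set K := ‖1 - Θ Complex.I‖ with hKdef
    have hlow : Tendsto (fun y : ℝ => K * (c / 2) * Real.exp (c / 2 * y)) atTop atTop := by
      apply Tendsto.const_mul_atTop (by positivity)
      exact Real.tendsto_exp_atTop.comp (Tendsto.const_mul_atTop (by positivity) tendsto_id)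
    apply tendsto_atTop_mono' atTop _ hlow
    filter_upwards [eventually_ge_atTop (1:ℝ)] with y hy
    have hbnd := schwarz_bound Θ hd hstrict hy
    set A := ‖1 - Θ ((y:ℂ) * Complex.I)‖ with hAdef
    have hA0 : 0 ≤ A := norm_nonneg _
    have e1 : Real.exp (c * y) = Real.exp (c / 2 * y) * Real.exp (c / 2 * y) := by
      rw [← Real.exp_add]; ring_nf
    have e2 : c / 2 * y ≤ Real.exp (c / 2 * y) := by
      have := Real.add_one_le_exp (c / 2 * y)
      linarith
    have hE : 0 < Real.exp (c / 2 * y) := Real.exp_pos _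
    rw [e1]
    nlinarith [mul_le_mul_of_nonneg_right hbnd (mul_nonneg (by positivity : (0:ℝ) ≤ c/2) hE.le),
      mul_le_mul_of_nonneg_right e2 (mul_nonneg hA0 hE.le), hK.le]
  · -- Θ is constant on ℂ₊
    have h1 : ‖Θ Complex.I‖ = 1 := le_antisymm (hb Complex.I hIU) (not_lt.1 hI)
    have hmax : IsMaxOn (norm ∘ Θ) {w : ℂ | 0 < w.im} Complex.I := by
      intro x hx
      simpa [h1] using hb x hx
    have heq := Complex.eqOn_of_isPreconnected_of_isMaxOn_norm hconn hopen hd hIU hmax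
    have hbne : Θ Complex.I ≠ 1 := by
      intro hcon
      exact hz₀ne ((heq hz₀).trans (by simp [hcon]))
    have hK : 0 < ‖1 - Θ Complex.I‖ := by
      rw [norm_pos_iff, sub_ne_zero]
      exact fun hcon => hbne hcon.symm
    have hcongr : ∀ᶠ y : ℝ in atTop,
        Real.exp (c * y) * ‖1 - Θ Complex.I‖
          = Real.exp (c * y) * ‖1 - Θ ((y:ℝ) * Complex.I)‖ := by
      filter_upwards [eventually_gt_atTop (0:ℝ)] with y hy
      have : Θ ((y:ℝ) * Complex.I) = Θ Complex.I := by
        have hmem : ((y:ℝ) : ℂ) * Complex.I ∈ {w : ℂ | 0 < w.im} := by simp [hy]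
        exact (heq hmem).trans rfl
      rw [this]
    apply Tendsto.congr' hcongr
    exact Tendsto.atTop_mul_const hK
      (Real.tendsto_exp_atTop.comp (Tendsto.const_mul_atTop hc tendsto_id))
end
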